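/- Let p be a polynomial in k real variables of total degree d such that |p| ≤ 1 on [−1,1]^k. Then for each coordinate direction j, the partial derivative satisfies sup_{x ∈ [−1,1]^k} |∂p/∂x_j (x)| ≤ c_k · d², where c_k is a constant depending only on k (and for k = 1 one may take c_1 = 1). -/

import Mathlib

namespace BM
open Polynomial Finset Real

/-- `cos (k π)` -/
lemma cos_nat_mul_pi (m : ℕ) : Real.cos (m * π) = (-1 : ℝ) ^ m := by
  induction m with
  | zero => simp
  | succ m ih =>
      have : ((m + 1 : ℕ) : ℝ) * π = m * π + π := by push_cast; ring
      rw [this, Real.cos_add_pi, ih, pow_succ]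
      ring

lemma natDegree_T_le : ∀ n : ℕ, (Chebyshev.T ℝ n).natDegree ≤ n
  | 0 => by simp [Chebyshev.T_zero]
  | 1 => by simp [Chebyshev.T_one]
  | (n + 2) => by
      have h1 := natDegree_T_le (n + 1)
      have h0 := natDegree_T_le n
      have hc : ((n + 2 : ℕ) : ℤ) = (n : ℤ) + 2 := by push_cast; ring
      rw [hc, Chebyshev.T_add_two]
      refine (natDegree_sub_le _ _).trans (max_le ?_ ?_)
      · refine (natDegree_mul_le).trans ?_
        have : (2 * X : ℝ[X]).natDegree ≤ 1 := natDegree_mul_le.trans (by simp)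
        have h1' : (Chebyshev.T ℝ ((n : ℤ) + 1)).natDegree ≤ n + 1 := by
          have : ((n + 1 : ℕ) : ℤ) = (n : ℤ) + 1 := by push_cast; ring
          rw [← this]; exact h1
        omega
      · omega

lemma T_eval_one (n : ℤ) : (Chebyshev.T ℝ n).eval 1 = 1 := by
  have h := Chebyshev.T_real_cos 0 n
  simpa using h

lemma deriv_T_eval_one : ∀ n : ℕ, (derivative (Chebyshev.T ℝ n)).eval 1 = (n : ℝ) ^ 2
  | 0 => by simp [Chebyshev.T_zero]
  | 1 => by simp [Chebyshev.T_one]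
  | (n + 2) => by
      have h1 := deriv_T_eval_one (n + 1)
      have h0 := deriv_T_eval_one n
      have hc : ((n + 2 : ℕ) : ℤ) = (n : ℤ) + 2 := by push_cast; ring
      have hc1 : ((n + 1 : ℕ) : ℤ) = (n : ℤ) + 1 := by push_cast; ring
      rw [hc, Chebyshev.T_add_two]
      rw [derivative_sub, derivative_mul, derivative_mul]
      simp only [derivative_ofNat, derivative_X, eval_sub, eval_add, eval_mul, eval_X,
        eval_ofNat, eval_one, eval_zero, mul_one, one_mul, zero_mul, add_zero, zero_add]
      rw [← hc1] at *
      rw [h1, h0, T_eval_one]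
      push_cast
      ring


lemma derivative_finset_prod {ι : Type*} [DecidableEq ι] (s : Finset ι) (f : ι → ℝ[X]) :
    derivative (∏ i ∈ s, f i) = ∑ i ∈ s, (∏ j ∈ s.erase i, f j) * derivative (f i) := by
  induction s using Finset.induction_on with
  | empty => simp
  | insert a s ha ih =>
      rw [Finset.prod_insert ha, derivative_mul, ih, Finset.sum_insert ha,
        Finset.erase_insert ha, Finset.mul_sum]
      have key : ∀ i ∈ s, f a * ((∏ j ∈ s.erase i, f j) * derivative (f i))
          = (∏ j ∈ (insert a s).erase i, f j) * derivative (f i) := by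
        intro i hi
        have hia : i ≠ a := by rintro rfl; exact ha hi
        rw [Finset.erase_insert_of_ne hia.symm,
          Finset.prod_insert (fun h => ha (Finset.mem_of_mem_erase h)), mul_assoc]
      rw [Finset.sum_congr rfl key]
      ring

noncomputable def node (n j : ℕ) : ℝ := Real.cos (j * π / n)

lemma node_arg_mem {n j : ℕ} (hn : 1 ≤ n) (hj : j ≤ n) :
    ((j : ℝ) * π / n) ∈ Set.Icc 0 π := by
  have hπ := Real.pi_pos
  have hn' : (0 : ℝ) < n := by exact_mod_cast hn
  have hj' : (j : ℝ) ≤ n := by exact_mod_cast hj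
  constructor
  · positivity
  · rw [div_le_iff₀ hn']; nlinarith

lemma node_zero {n : ℕ} : node n 0 = 1 := by simp [node]

lemma node_lt {n : ℕ} (hn : 1 ≤ n) {i j : ℕ} (hj : j ≤ n) (hij : i < j) :
    node n j < node n i := by
  have hi : i ≤ n := le_trans (Nat.le_of_lt hij) hj
  have hπ := Real.pi_pos
  have hn' : (0 : ℝ) < n := by exact_mod_cast hn
  refine Real.strictAntiOn_cos (node_arg_mem hn hi) (node_arg_mem hn hj) ?_
  have hij' : (i : ℝ) < j := by exact_mod_cast hij
  have : (i : ℝ) * π < j * π := by nlinarith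
  exact div_lt_div_of_pos_right this hn'

lemma node_mem_Icc {n j : ℕ} : node n j ∈ Set.Icc (-1 : ℝ) 1 :=
  ⟨Real.neg_one_le_cos _, Real.cos_le_one _⟩

lemma node_injOn {n : ℕ} (hn : 1 ≤ n) :
    Set.InjOn (node n) ↑(Finset.range (n + 1)) := by
  intro i hi j hj hij
  simp only [Finset.coe_range, Set.mem_Iio] at hi hj
  rcases lt_trichotomy i j with h | h | h
  · exact absurd hij (ne_of_gt (node_lt hn (by omega) h))
  · exact h
  · exact absurd hij (ne_of_lt (node_lt hn (by omega) h))

lemma eval_one_basisDivisor {a c : ℝ} :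
    eval 1 (Lagrange.basisDivisor a c) = (a - c)⁻¹ * (1 - c) := by
  simp [Lagrange.basisDivisor]

lemma deriv_basisDivisor {a c : ℝ} :
    derivative (Lagrange.basisDivisor a c) = C (a - c)⁻¹ := by
  simp [Lagrange.basisDivisor]


lemma node_lt_one {n j : ℕ} (hn : 1 ≤ n) (hj1 : 1 ≤ j) (hjn : j ≤ n) : node n j < 1 := by
  have := node_lt hn hjn hj1
  rwa [node_zero] at this

lemma eval_one_deriv_basis_eq {n k : ℕ} :
    eval 1 (derivative (Lagrange.basis (Finset.range (n + 1)) (node n) k))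
      = ∑ i ∈ (Finset.range (n + 1)).erase k,
          (∏ j ∈ ((Finset.range (n + 1)).erase k).erase i,
            ((node n k - node n j)⁻¹ * (1 - node n j))) * (node n k - node n i)⁻¹ := by
  rw [Lagrange.basis, derivative_finset_prod, eval_finset_sum]
  refine Finset.sum_congr rfl fun i hi => ?_
  rw [eval_mul, deriv_basisDivisor, eval_C, eval_prod]
  exact congrArg₂ _ (Finset.prod_congr rfl fun j hj => eval_one_basisDivisor) rfl

lemma abs_eval_one_deriv_basis {n k : ℕ} (hn : 1 ≤ n) (hk : k ∈ Finset.range (n + 1)) :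
    |eval 1 (derivative (Lagrange.basis (Finset.range (n + 1)) (node n) k))|
      = (-1) ^ k * eval 1 (derivative (Lagrange.basis (Finset.range (n + 1)) (node n) k)) := by
  have hkn : k ≤ n := by simpa [Nat.lt_succ_iff] using hk
  set B := eval 1 (derivative (Lagrange.basis (Finset.range (n + 1)) (node n) k)) with hBdef
  suffices h : 0 ≤ (-1 : ℝ) ^ k * B by
    calc |B| = |(-1 : ℝ) ^ k * B| := by
          rw [abs_mul, abs_pow, abs_neg, abs_one, one_pow, one_mul]
      _ = (-1) ^ k * B := abs_of_nonneg h
  have hB := eval_one_deriv_basis_eq (n := n) (k := k)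
  rw [← hBdef] at hB
  rcases Nat.eq_zero_or_pos k with rfl | hkpos
  · rw [pow_zero, one_mul, hB]
    refine Finset.sum_nonneg fun i hi => ?_
    have hi' : 1 ≤ i ∧ i ≤ n := by
      simp only [Finset.mem_erase, Finset.mem_range] at hi; omega
    have h1 : node n i < 1 := node_lt_one hn hi'.1 hi'.2
    refine mul_nonneg (Finset.prod_nonneg fun j hj => ?_) ?_
    · have hj' : 1 ≤ j ∧ j ≤ n := by
        simp only [Finset.mem_erase, Finset.mem_range] at hj; omega
      have h2 : node n j < 1 := node_lt_one hn hj'.1 hj'.2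
      rw [node_zero]
      exact mul_nonneg (inv_nonneg.2 (by linarith)) (by linarith)
    · rw [node_zero]
      exact inv_nonneg.2 (by linarith)
  · -- k ≥ 1
    obtain ⟨m, rfl⟩ : ∃ m, k = m + 1 := ⟨k - 1, by omega⟩
    set k := m + 1
    have hklt1 : node n k < 1 := node_lt_one hn (by omega) hkn
    have h0E : (0 : ℕ) ∈ (Finset.range (n + 1)).erase k := by
      simp only [Finset.mem_erase, Finset.mem_range]; omega
    have hsingle : B = (∏ j ∈ ((Finset.range (n + 1)).erase k).erase 0,
        ((node n k - node n j)⁻¹ * (1 - node n j))) * (node n k - node n 0)⁻¹ := by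
      rw [hB]
      refine Finset.sum_eq_single_of_mem 0 h0E fun i hi hi0 => ?_
      have h0mem : (0 : ℕ) ∈ (((Finset.range (n + 1)).erase k).erase i) := by
        simp only [Finset.mem_erase, Finset.mem_range]
        exact ⟨Ne.symm hi0, by omega, by omega⟩
      rw [Finset.prod_eq_zero h0mem (by rw [node_zero]; ring), zero_mul]
    have hsplit : ((Finset.range (n + 1)).erase k).erase 0
        = Finset.Ico 1 k ∪ Finset.Ico (k + 1) (n + 1) := by
      ext j
      simp only [Finset.mem_erase, Finset.mem_range, Finset.mem_union, Finset.mem_Ico]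
      omega
    have hdisj : Disjoint (Finset.Ico 1 k) (Finset.Ico (k + 1) (n + 1)) := by
      rw [Finset.disjoint_left]
      intro j hj hj'
      simp only [Finset.mem_Ico] at hj hj'
      omega
    set g : ℕ → ℝ := fun j => (node n k - node n j)⁻¹ * (1 - node n j) with hg
    have hprod : (∏ j ∈ ((Finset.range (n + 1)).erase k).erase 0, g j)
        = (∏ j ∈ Finset.Ico 1 k, g j) * ∏ j ∈ Finset.Ico (k + 1) (n + 1), g j := by
      rw [hsplit, Finset.prod_union hdisj]
    have hP1 : 0 ≤ (-1 : ℝ) ^ m * ∏ j ∈ Finset.Ico 1 k, g j := by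
      have hcard : (Finset.Ico 1 k).card = m := by rw [Nat.card_Ico]; omega
      have heq : (∏ j ∈ Finset.Ico 1 k, (-(g j))) = (-1 : ℝ) ^ m * ∏ j ∈ Finset.Ico 1 k, g j := by
        calc (∏ j ∈ Finset.Ico 1 k, (-(g j)))
            = ∏ j ∈ Finset.Ico 1 k, ((-1) * g j) := by
              refine Finset.prod_congr rfl fun j hj => by ring
          _ = ((-1 : ℝ) ^ (Finset.Ico 1 k).card) * ∏ j ∈ Finset.Ico 1 k, g j := by
              rw [Finset.prod_mul_distrib, Finset.prod_const]
          _ = (-1 : ℝ) ^ m * ∏ j ∈ Finset.Ico 1 k, g j := by rw [hcard]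
      rw [← heq]
      refine Finset.prod_nonneg fun j hj => ?_
      simp only [Finset.mem_Ico] at hj
      have hjk : node n k < node n j := node_lt hn hkn hj.2
      have hj1 : node n j < 1 := node_lt_one hn hj.1 (by omega)
      have : (node n k - node n j)⁻¹ ≤ 0 := inv_nonpos.2 (by linarith)
      have : g j ≤ 0 := mul_nonpos_of_nonpos_of_nonneg this (by linarith)
      linarith
    have hP2 : 0 ≤ ∏ j ∈ Finset.Ico (k + 1) (n + 1), g j := by
      refine Finset.prod_nonneg fun j hj => ?_
      simp only [Finset.mem_Ico] at hj
      have hjk : node n j < node n k := node_lt hn (by omega) (by omega)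
      have hj1 : node n j < 1 := node_lt_one hn (by omega) (by omega)
      exact mul_nonneg (inv_nonneg.2 (by linarith)) (by linarith)
    have hinv : (node n k - node n 0)⁻¹ = -(1 - node n k)⁻¹ := by
      rw [node_zero, show node n k - 1 = -(1 - node n k) by ring, inv_neg]
    have hinvpos : 0 ≤ (1 - node n k)⁻¹ := inv_nonneg.2 (by linarith)
    have hkey : (-1 : ℝ) ^ k * B
        = ((-1 : ℝ) ^ m * ∏ j ∈ Finset.Ico 1 k, g j)
            * ((∏ j ∈ Finset.Ico (k + 1) (n + 1), g j) * (1 - node n k)⁻¹) := by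
      rw [hsingle, hprod, hinv, pow_succ]
      ring
    rw [hkey]
    exact mul_nonneg hP1 (mul_nonneg hP2 hinvpos)


lemma degree_lt_card {n : ℕ} (q : ℝ[X]) (hdeg : q.natDegree ≤ n) :
    q.degree < ((Finset.range (n + 1)).card : WithBot ℕ) := by
  rw [Finset.card_range]
  refine lt_of_le_of_lt degree_le_natDegree ?_
  exact_mod_cast Nat.lt_succ_of_le hdeg

lemma T_node_eval {n k : ℕ} (hn : 1 ≤ n) (hk : k ∈ Finset.range (n + 1)) :
    eval (node n k) (Chebyshev.T ℝ n) = (-1 : ℝ) ^ k := by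
  have hn' : (n : ℝ) ≠ 0 := by positivity
  have harg : ((n : ℤ) : ℝ) * ((k : ℝ) * π / n) = (k : ℝ) * π := by
    push_cast; field_simp
  calc eval (node n k) (Chebyshev.T ℝ n)
      = Real.cos (((n : ℤ) : ℝ) * ((k : ℝ) * π / n)) := Chebyshev.T_real_cos _ _
    _ = Real.cos ((k : ℝ) * π) := by rw [harg]
    _ = (-1 : ℝ) ^ k := cos_nat_mul_pi k

lemma deriv_interpolate_eval_one {n : ℕ} (hn : 1 ≤ n) (q : ℝ[X]) (hdeg : q.natDegree ≤ n) :
    eval 1 (derivative q) = ∑ k ∈ Finset.range (n + 1), eval (node n k) q *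
      eval 1 (derivative (Lagrange.basis (Finset.range (n + 1)) (node n) k)) := by
  conv_lhs => rw [Lagrange.eq_interpolate (node_injOn hn) (degree_lt_card q hdeg)]
  rw [Lagrange.interpolate_apply, derivative_sum, eval_finset_sum]
  refine Finset.sum_congr rfl fun k hk => ?_
  rw [derivative_C_mul, eval_mul, eval_C]

lemma sum_sign_deriv_basis {n : ℕ} (hn : 1 ≤ n) :
    ∑ k ∈ Finset.range (n + 1),
      (-1 : ℝ) ^ k * eval 1 (derivative (Lagrange.basis (Finset.range (n + 1)) (node n) k))
    = (n : ℝ) ^ 2 := by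
  have h := deriv_interpolate_eval_one hn (Chebyshev.T ℝ n) (natDegree_T_le n)
  rw [deriv_T_eval_one n] at h
  rw [h]
  exact Finset.sum_congr rfl fun k hk => by rw [T_node_eval hn hk]

lemma endpoint_markov {n : ℕ} (hn : 1 ≤ n) (q : ℝ[X]) (hdeg : q.natDegree ≤ n)
    (hb : ∀ t ∈ Set.Icc (-1 : ℝ) 1, |eval t q| ≤ 1) :
    |eval 1 (derivative q)| ≤ (n : ℝ) ^ 2 := by
  rw [deriv_interpolate_eval_one hn q hdeg]
  calc |∑ k ∈ Finset.range (n + 1), eval (node n k) q *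
        eval 1 (derivative (Lagrange.basis (Finset.range (n + 1)) (node n) k))|
      ≤ ∑ k ∈ Finset.range (n + 1), |eval (node n k) q *
        eval 1 (derivative (Lagrange.basis (Finset.range (n + 1)) (node n) k))| :=
        Finset.abs_sum_le_sum_abs _ _
    _ ≤ ∑ k ∈ Finset.range (n + 1),
        |eval 1 (derivative (Lagrange.basis (Finset.range (n + 1)) (node n) k))| := by
        refine Finset.sum_le_sum fun k hk => ?_
        rw [abs_mul]
        have h1 : |eval (node n k) q| ≤ 1 := hb _ node_mem_Icc
        have h2 : (0:ℝ) ≤ |eval 1 (derivative (Lagrange.basis (Finset.range (n + 1)) (node n) k))| :=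
          abs_nonneg _
        nlinarith
    _ = ∑ k ∈ Finset.range (n + 1),
        (-1 : ℝ) ^ k * eval 1 (derivative (Lagrange.basis (Finset.range (n + 1)) (node n) k)) :=
        Finset.sum_congr rfl fun k hk => abs_eval_one_deriv_basis hn hk
    _ = (n : ℝ) ^ 2 := sum_sign_deriv_basis hn

lemma scaled_markov {n : ℕ} (hn : 1 ≤ n) (q : ℝ[X]) (hdeg : q.natDegree ≤ n)
    (hb : ∀ t ∈ Set.Icc (-1 : ℝ) 1, |eval t q| ≤ 1) (a b : ℝ) (ha : 1 / 2 ≤ |a|)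
    (hmaps : ∀ t ∈ Set.Icc (-1 : ℝ) 1, a * t + b ∈ Set.Icc (-1 : ℝ) 1) :
    |eval (a + b) (derivative q)| ≤ 2 * (n : ℝ) ^ 2 := by
  set Q := q.comp (C a * X + C b) with hQ
  have hlin : (C a * X + C b : ℝ[X]).natDegree ≤ 1 :=
    (natDegree_add_le _ _).trans (max_le ((natDegree_C_mul_le _ _).trans natDegree_X_le) (by simp))
  have hQdeg : Q.natDegree ≤ n := by
    refine natDegree_comp_le.trans ?_
    calc q.natDegree * (C a * X + C b : ℝ[X]).natDegree ≤ q.natDegree * 1 :=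
          Nat.mul_le_mul_left _ hlin
      _ ≤ n := by omega
  have hevallin : ∀ t : ℝ, eval t (C a * X + C b : ℝ[X]) = a * t + b := by
    intro t; simp
  have hQb : ∀ t ∈ Set.Icc (-1 : ℝ) 1, |eval t Q| ≤ 1 := by
    intro t ht
    rw [hQ, eval_comp, hevallin]
    exact hb _ (hmaps t ht)
  have h1 := endpoint_markov hn Q hQdeg hQb
  have hderiv : eval 1 (derivative Q) = eval (a + b) (derivative q) * a := by
    rw [hQ, derivative_comp, eval_mul, eval_comp, hevallin,
      show a * 1 + b = a + b by ring]
    norm_num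
    ring
  rw [hderiv, abs_mul] at h1
  have h2 : (0:ℝ) ≤ |eval (a + b) (derivative q)| := abs_nonneg _
  nlinarith

lemma markov_poly {n : ℕ} (hn : 1 ≤ n) (q : ℝ[X]) (hdeg : q.natDegree ≤ n)
    (hb : ∀ t ∈ Set.Icc (-1 : ℝ) 1, |eval t q| ≤ 1) :
    ∀ x ∈ Set.Icc (-1 : ℝ) 1, |eval x (derivative q)| ≤ 2 * (n : ℝ) ^ 2 := by
  intro x hx
  obtain ⟨hx1, hx2⟩ := hx
  rcases le_or_gt 0 x with h | h
  · have hm : ∀ t ∈ Set.Icc (-1 : ℝ) 1, (1 + x) / 2 * t + (x - 1) / 2 ∈ Set.Icc (-1 : ℝ) 1 := by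
      intro t ht
      obtain ⟨ht1, ht2⟩ := ht
      constructor <;> nlinarith
    have := scaled_markov hn q hdeg hb ((1 + x) / 2) ((x - 1) / 2)
      (by rw [abs_of_nonneg (by linarith)]; linarith) hm
    have hab : (1 + x) / 2 + (x - 1) / 2 = x := by ring
    rwa [hab] at this
  · have hm : ∀ t ∈ Set.Icc (-1 : ℝ) 1, (x - 1) / 2 * t + (x + 1) / 2 ∈ Set.Icc (-1 : ℝ) 1 := by
      intro t ht
      obtain ⟨ht1, ht2⟩ := ht
      constructor <;> nlinarith
    have := scaled_markov hn q hdeg hb ((x - 1) / 2) ((x + 1) / 2)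
      (by rw [abs_of_nonpos (by linarith)]; linarith) hm
    have hab : (x - 1) / 2 + (x + 1) / 2 = x := by ring
    rwa [hab] at this


section MV
variable {k : ℕ}

noncomputable def sub1 (x : Fin k → ℝ) (j : Fin k) : Fin k → ℝ[X] :=
  fun i => if i = j then Polynomial.X else Polynomial.C (x i)

lemma eval_aeval_sub1 (x : Fin k → ℝ) (j : Fin k) (p : MvPolynomial (Fin k) ℝ) (t : ℝ) :
    eval t (MvPolynomial.aeval (sub1 x j) p) = MvPolynomial.eval (Function.update x j t) p := by
  induction p using MvPolynomial.induction_on with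
  | C a => simp
  | add p q hp hq => simp [hp, hq]
  | mul_X p i hp =>
      rw [map_mul, MvPolynomial.aeval_X, eval_mul, hp, map_mul, MvPolynomial.eval_X]
      congr 1
      rw [Function.update_apply, sub1]
      split_ifs with h <;> simp

lemma deriv_aeval_sub1 (x : Fin k → ℝ) (j : Fin k) (p : MvPolynomial (Fin k) ℝ) :
    derivative (MvPolynomial.aeval (sub1 x j) p)
      = MvPolynomial.aeval (sub1 x j) (MvPolynomial.pderiv j p) := by
  induction p using MvPolynomial.induction_on with
  | C a => simp
  | add p q hp hq => simp [hp, hq]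
  | mul_X p i hp =>
      rw [map_mul, MvPolynomial.aeval_X, derivative_mul, hp, MvPolynomial.pderiv_mul, map_add,
        map_mul, MvPolynomial.aeval_X]
      by_cases h : i = j
      · subst h
        rw [MvPolynomial.pderiv_X_self, sub1]
        simp
      · rw [MvPolynomial.pderiv_X_of_ne h, sub1]
        simp [h]

lemma natDegree_aeval_sub1 (x : Fin k → ℝ) (j : Fin k) (p : MvPolynomial (Fin k) ℝ) :
    (MvPolynomial.aeval (sub1 x j) p).natDegree ≤ p.totalDegree := by
  rw [MvPolynomial.aeval_def, MvPolynomial.eval₂_eq]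
  refine natDegree_sum_le_of_forall_le _ _ fun m hm => ?_
  have hsub : ∀ i, (sub1 x j i).natDegree ≤ 1 := by
    intro i
    rw [sub1]
    split_ifs
    · exact le_of_eq natDegree_X
    · simp
  calc (algebraMap ℝ ℝ[X] (MvPolynomial.coeff m p) * ∏ i ∈ m.support, sub1 x j i ^ m i).natDegree
      ≤ (algebraMap ℝ ℝ[X] (MvPolynomial.coeff m p)).natDegree
          + (∏ i ∈ m.support, sub1 x j i ^ m i).natDegree := natDegree_mul_le
    _ ≤ 0 + ∑ i ∈ m.support, (sub1 x j i ^ m i).natDegree := by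
        refine add_le_add (le_of_eq ?_) (natDegree_prod_le _ _)
        exact natDegree_C _
    _ ≤ ∑ i ∈ m.support, m i := by
        rw [zero_add]
        refine Finset.sum_le_sum fun i hi => ?_
        refine natDegree_pow_le.trans ?_
        calc m i * (sub1 x j i).natDegree ≤ m i * 1 := Nat.mul_le_mul_left _ (hsub i)
          _ = m i := Nat.mul_one _
    _ ≤ p.totalDegree := by
        have h := MvPolynomial.le_totalDegree hm
        rwa [Finsupp.sum] at h

end MV

end BM

open MvPolynomial

/-- Bernstein–Markov inequality on the cube `[-1,1]^k`: there is a constant `c_k`,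
depending only on `k`, such that every polynomial of total degree at most `d`
bounded by `1` on `[-1,1]^k` has each partial derivative bounded by `c_k · d²`
on `[-1,1]^k`. -/
theorem stmt19 (k : ℕ) :
    ∃ c : ℝ, 0 < c ∧
      ∀ (d : ℕ) (p : MvPolynomial (Fin k) ℝ), p.totalDegree ≤ d →
        (∀ x ∈ Set.Icc (fun _ => (-1 : ℝ)) (fun _ => (1 : ℝ)),
          |MvPolynomial.eval x p| ≤ 1) →
        ∀ (j : Fin k), ∀ x ∈ Set.Icc (fun _ => (-1 : ℝ)) (fun _ => (1 : ℝ)),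
          |MvPolynomial.eval x (MvPolynomial.pderiv j p)| ≤ c * (d : ℝ) ^ 2 := by
  refine ⟨2, by norm_num, ?_⟩
  intro d p hdeg hb j x hx
  obtain ⟨hxl, hxu⟩ := hx
  set q := MvPolynomial.aeval (BM.sub1 x j) p with hq
  have hqdeg : q.natDegree ≤ d := (BM.natDegree_aeval_sub1 x j p).trans hdeg
  have hqb : ∀ t ∈ Set.Icc (-1 : ℝ) 1, |Polynomial.eval t q| ≤ 1 := by
    intro t ht
    rw [hq, BM.eval_aeval_sub1]
    refine hb _ ⟨fun i => ?_, fun i => ?_⟩ <;>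
      · rw [Function.update_apply]
        split_ifs
        · first
            | exact ht.1
            | exact ht.2
        · first
            | exact hxl i
            | exact hxu i
  have hkey : MvPolynomial.eval x (MvPolynomial.pderiv j p)
      = Polynomial.eval (x j) (Polynomial.derivative q) := by
    rw [hq, BM.deriv_aeval_sub1, BM.eval_aeval_sub1, Function.update_eq_self]
  rw [hkey]
  rcases Nat.eq_zero_or_pos d with rfl | hd
  · have hq0 : Polynomial.derivative q = 0 := by
      obtain ⟨a, ha⟩ := Polynomial.natDegree_eq_zero.mp (Nat.le_zero.mp hqdeg)
      rw [← ha, Polynomial.derivative_C]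
    rw [hq0]
    simp
  · exact BM.markov_poly hd q hqdeg hqb (x j) ⟨hxl j, hxu j⟩
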